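/- Let n ≥ k ≥ 2 be integers. In the integral group ring ℤ[Σ_n], with a = Σ_σ sgn(σ)·σ summed over permutations fixing each of k+1, …, n, and b = Σ_τ τ summed over permutations fixing each of 2, …, k, the ℤ-submodule ℤ[Σ_n]·(b·a) spanned by the elements g·b·a for g ∈ Σ_n is a free abelian group of rank binom(n−1, k−1). -/

import Mathlib

/-- The antisymmetrizer `a = Σ_σ sgn(σ)·σ ∈ ℤ[Σₙ]` over permutations of `{1,…,n}` fixing
each of `k+1,…,n` (in zero-based indexing: fixing every index `≥ k`). -/
noncomputable def hookA (n k : ℕ) : MonoidAlgebra ℤ (Equiv.Perm (Fin n)) :=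
  ∑ σ ∈ Finset.univ.filter (fun σ : Equiv.Perm (Fin n) => ∀ i : Fin n, k ≤ (i : ℕ) → σ i = i),
    MonoidAlgebra.single σ ((Equiv.Perm.sign σ : ℤ))

/-- The symmetrizer `b = Σ_τ τ ∈ ℤ[Σₙ]` over permutations of `{1,…,n}` fixing each of
`2,…,k` (in zero-based indexing: fixing every index `i` with `1 ≤ i < k`). -/
noncomputable def hookB (n k : ℕ) : MonoidAlgebra ℤ (Equiv.Perm (Fin n)) :=
  ∑ τ ∈ Finset.univ.filter
      (fun τ : Equiv.Perm (Fin n) => ∀ i : Fin n, 1 ≤ (i : ℕ) → (i : ℕ) < k → τ i = i),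
    MonoidAlgebra.single τ (1 : ℤ)

namespace HookAux

open Equiv Equiv.Perm Finset MonoidAlgebra

variable {n k : ℕ}

/-- The finset of permutations fixing every index `≥ k`. -/
def APf (n k : ℕ) : Finset (Equiv.Perm (Fin n)) :=
  Finset.univ.filter (fun σ : Equiv.Perm (Fin n) => ∀ i : Fin n, k ≤ (i : ℕ) → σ i = i)

/-- The finset of permutations fixing every index `i` with `1 ≤ i < k`. -/
def BPf (n k : ℕ) : Finset (Equiv.Perm (Fin n)) :=
  Finset.univ.filter
    (fun τ : Equiv.Perm (Fin n) => ∀ i : Fin n, 1 ≤ (i : ℕ) → (i : ℕ) < k → τ i = i)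

lemma mem_APf {σ : Equiv.Perm (Fin n)} :
    σ ∈ APf n k ↔ ∀ i : Fin n, k ≤ (i : ℕ) → σ i = i := by
  simp [APf]

lemma mem_BPf {τ : Equiv.Perm (Fin n)} :
    τ ∈ BPf n k ↔ ∀ i : Fin n, 1 ≤ (i : ℕ) → (i : ℕ) < k → τ i = i := by
  simp [BPf]

lemma hookA_eq : hookA n k = ∑ σ ∈ APf n k, single σ ((Equiv.Perm.sign σ : ℤ)) := rfl

lemma hookB_eq : hookB n k = ∑ τ ∈ BPf n k, single τ (1 : ℤ) := rfl

lemma one_mem_APf : (1 : Equiv.Perm (Fin n)) ∈ APf n k := by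
  simp [mem_APf]

lemma one_mem_BPf : (1 : Equiv.Perm (Fin n)) ∈ BPf n k := by
  simp [mem_BPf]

lemma mul_mem_APf {σ τ : Equiv.Perm (Fin n)} (hσ : σ ∈ APf n k) (hτ : τ ∈ APf n k) :
    σ * τ ∈ APf n k := by
  rw [mem_APf] at *
  intro i hi
  simp [Equiv.Perm.mul_apply, hτ i hi, hσ i hi]

lemma inv_mem_APf {σ : Equiv.Perm (Fin n)} (hσ : σ ∈ APf n k) : σ⁻¹ ∈ APf n k := by
  rw [mem_APf] at *
  intro i hi
  have := hσ i hi
  conv_lhs => rw [← this]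
  simp

lemma mul_mem_BPf {σ τ : Equiv.Perm (Fin n)} (hσ : σ ∈ BPf n k) (hτ : τ ∈ BPf n k) :
    σ * τ ∈ BPf n k := by
  rw [mem_BPf] at *
  intro i h1 h2
  simp [Equiv.Perm.mul_apply, hτ i h1 h2, hσ i h1 h2]

lemma inv_mem_BPf {σ : Equiv.Perm (Fin n)} (hσ : σ ∈ BPf n k) : σ⁻¹ ∈ BPf n k := by
  rw [mem_BPf] at *
  intro i h1 h2
  have := hσ i h1 h2
  conv_lhs => rw [← this]
  simp

/-- Left multiplication by an element of `B` fixes `hookB`. -/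
lemma single_mul_hookB {h : Equiv.Perm (Fin n)} (hh : h ∈ BPf n k) :
    single h (1 : ℤ) * hookB n k = hookB n k := by
  rw [hookB_eq, Finset.mul_sum]
  refine Finset.sum_equiv (Equiv.mulLeft h) (fun τ => ?_) (fun τ hτ => ?_)
  · constructor
    · intro hτ; exact mul_mem_BPf hh hτ
    · intro hτ
      have : τ = h⁻¹ * (h * τ) := by group
      rw [this]
      exact mul_mem_BPf (inv_mem_BPf hh) hτ
  · simp [MonoidAlgebra.single_mul_single]

/-- Left multiplication by an element of `A` scales `hookA` by its sign. -/
lemma single_mul_hookA {σ : Equiv.Perm (Fin n)} (hσ : σ ∈ APf n k) :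
    single σ (1 : ℤ) * hookA n k = ((Equiv.Perm.sign σ : ℤ)) • hookA n k := by
  rw [hookA_eq, Finset.mul_sum, Finset.smul_sum]
  refine Finset.sum_equiv (Equiv.mulLeft σ) (fun ρ => ?_) (fun ρ hρ => ?_)
  · constructor
    · intro hρ; exact mul_mem_APf hσ hρ
    · intro hρ
      have : ρ = σ⁻¹ * (σ * ρ) := by group
      rw [this]
      exact mul_mem_APf (inv_mem_APf hσ) hρ
  · rw [MonoidAlgebra.single_mul_single, MonoidAlgebra.smul_single', one_mul, Equiv.coe_mulLeft]
    congr 1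
    rw [map_mul]
    rcases Int.units_eq_one_or (Equiv.Perm.sign σ) with h | h <;> simp [h]

/-- Membership bound: an element of `APf` maps indices `< k` to indices `< k`. -/
lemma apf_lt_k {σ : Equiv.Perm (Fin n)} (hσ : σ ∈ APf n k) {i : Fin n}
    (h : (i : ℕ) < k) : ((σ i : Fin n) : ℕ) < k := by
  by_contra h'
  push_neg at h'
  have h2 := mem_APf.mp hσ (σ i) h'
  have := σ.injective h2
  rw [← this] at h
  omega

lemma pp_apply_iff [NeZero n] {σ : Equiv.Perm (Fin n)} (hσ : σ ∈ APf n k)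
    (h0 : σ 0 = 0) (i : Fin n) :
    (1 ≤ (i : ℕ) ∧ (i : ℕ) < k) ↔ (1 ≤ ((σ i : Fin n) : ℕ) ∧ ((σ i : Fin n) : ℕ) < k) := by
  constructor
  · rintro ⟨h1, h2⟩
    refine ⟨?_, apf_lt_k hσ h2⟩
    by_contra h'
    push_neg at h'
    interval_cases hσi : ((σ i : Fin n) : ℕ)
    have : σ i = 0 := by
      apply Fin.ext
      simpa using hσi
    rw [← h0] at this
    have := σ.injective this
    rw [this] at h1
    simp at h1
  · rintro ⟨h1, h2⟩
    by_contra h'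
    rw [not_and_or] at h'
    push_neg at h'
    rcases h' with h' | h'
    · have hi0 : i = 0 := by
        apply Fin.ext
        simp only [Fin.val_zero]
        omega
      rw [hi0, h0] at h1
      simp at h1
    · rw [mem_APf.mp hσ i h'] at h2
      omega

lemma conj_mem_BPf [NeZero n] {σ τ : Equiv.Perm (Fin n)} (hσ : σ ∈ APf n k)
    (h0 : σ 0 = 0) (hτ : τ ∈ BPf n k) : σ * τ * σ⁻¹ ∈ BPf n k := by
  rw [mem_BPf]
  intro i h1 h2
  have hppinv : 1 ≤ ((σ⁻¹ i : Fin n) : ℕ) ∧ ((σ⁻¹ i : Fin n) : ℕ) < k := by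
    have := pp_apply_iff hσ h0 (σ⁻¹ i)
    rw [← Equiv.Perm.mul_apply, mul_inv_cancel, Equiv.Perm.one_apply] at this
    exact this.mpr ⟨h1, h2⟩
  simp only [Equiv.Perm.mul_apply]
  rw [mem_BPf.mp hτ _ hppinv.1 hppinv.2, ← Equiv.Perm.mul_apply, mul_inv_cancel, Equiv.Perm.one_apply]

/-- An element of `A` fixing `0` commutes with `hookB`. -/
lemma single_hookB_comm [NeZero n] {σ : Equiv.Perm (Fin n)} (hσ : σ ∈ APf n k)
    (h0 : σ 0 = 0) :
    single σ (1 : ℤ) * hookB n k = hookB n k * single σ (1 : ℤ) := by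
  rw [hookB_eq, Finset.mul_sum, Finset.sum_mul]
  refine Finset.sum_equiv ((Equiv.mulLeft σ).trans (Equiv.mulRight σ⁻¹))
    (fun τ => ?_) (fun τ hτ => ?_)
  · simp only [Equiv.trans_apply, Equiv.coe_mulLeft, Equiv.coe_mulRight]
    constructor
    · intro h; exact conj_mem_BPf hσ h0 h
    · intro h
      have hτ' : σ⁻¹ * (σ * τ * σ⁻¹) * σ⁻¹⁻¹ = τ := by group
      have := conj_mem_BPf (inv_mem_APf hσ) (Equiv.Perm.inv_eq_iff_eq.mpr h0.symm) h
      rwa [hτ'] at this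
  · simp only [Equiv.trans_apply, Equiv.coe_mulLeft, Equiv.coe_mulRight,
      MonoidAlgebra.single_mul_single, one_mul, mul_one]
    congr 1
    group

lemma single_mul_hookBA [NeZero n] {h : Equiv.Perm (Fin n)} (hh : h ∈ BPf n k) :
    single h (1 : ℤ) * (hookB n k * hookA n k) = hookB n k * hookA n k := by
  rw [← mul_assoc, single_mul_hookB hh]

lemma single_mul_hookBA_sign [NeZero n] {σ : Equiv.Perm (Fin n)} (hσ : σ ∈ APf n k)
    (h0 : σ 0 = 0) :
    single σ (1 : ℤ) * (hookB n k * hookA n k)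
      = ((Equiv.Perm.sign σ : ℤ)) • (hookB n k * hookA n k) := by
  rw [← mul_assoc, single_hookB_comm hσ h0, mul_assoc, single_mul_hookA hσ,
    mul_smul_comm]

/-- The finset of indices `1 ≤ i < k`. -/
def ppf (n k : ℕ) : Finset (Fin n) :=
  Finset.univ.filter (fun i : Fin n => 1 ≤ (i : ℕ) ∧ (i : ℕ) < k)

lemma mem_ppf {i : Fin n} : i ∈ ppf n k ↔ 1 ≤ (i : ℕ) ∧ (i : ℕ) < k := by
  simp [ppf]

lemma card_ppf (hn : k ≤ n) : (ppf n k).card = k - 1 := by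
  have hlt : ∀ m ∈ Finset.Ico 1 k, m < n := by
    intro m hm
    rw [Finset.mem_Ico] at hm
    omega
  have : ppf n k = (Finset.Ico 1 k).attachFin hlt := by
    ext i
    rw [mem_ppf, Finset.mem_attachFin, Finset.mem_Ico]
  rw [this, Finset.card_attachFin, Nat.card_Ico]

/-- Key coset decomposition: if `g` and `gs` both map the index block `{1,…,k-1}` into a
set `S` of size `k-1`, then `g·b·a` is a scalar multiple of `gs·b·a`. -/
lemma stepA [NeZero n] (hk : 2 ≤ k) (hn : k ≤ n) (S : Finset (Fin n))
    (hS : S.card = k - 1) (g gs : Equiv.Perm (Fin n))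
    (hg : ∀ i : Fin n, 1 ≤ (i : ℕ) → (i : ℕ) < k → g i ∈ S)
    (hgs : ∀ i : Fin n, 1 ≤ (i : ℕ) → (i : ℕ) < k → gs i ∈ S) :
    ∃ ε : ℤ, single g (1 : ℤ) * (hookB n k * hookA n k)
      = ε • (single gs (1 : ℤ) * (hookB n k * hookA n k)) := by
  classical
  have hcardF : (ppf n k).card = k - 1 := card_ppf hn
  -- the image of `ppf` under `gs` is `S`
  have himg : (ppf n k).image gs = S := by
    apply Finset.eq_of_subset_of_card_le
    · intro x hx
      rw [Finset.mem_image] at hx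
      obtain ⟨i, hi, rfl⟩ := hx
      rw [mem_ppf] at hi
      exact hgs i hi.1 hi.2
    · rw [Finset.card_image_of_injective _ gs.injective, hcardF, hS]
  set u : Equiv.Perm (Fin n) := gs⁻¹ * g with hu
  have hupp : ∀ i : Fin n, i ∈ ppf n k → u i ∈ ppf n k := by
    intro i hi
    rw [mem_ppf] at hi
    have hgi : g i ∈ (ppf n k).image gs := by
      rw [himg]; exact hg i hi.1 hi.2
    rw [Finset.mem_image] at hgi
    obtain ⟨j, hj, hgj⟩ := hgi
    have : u i = j := by
      rw [hu]
      simp only [Equiv.Perm.mul_apply]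
      rw [← hgj]
      simp
    rw [this]
    exact hj
  have himgu : (ppf n k).image u = ppf n k := by
    apply Finset.eq_of_subset_of_card_le
    · intro x hx
      rw [Finset.mem_image] at hx
      obtain ⟨i, hi, rfl⟩ := hx
      exact hupp i hi
    · rw [Finset.card_image_of_injective _ u.injective]
  have hiff : ∀ i : Fin n, i ∈ ppf n k ↔ u i ∈ ppf n k := by
    intro i
    refine ⟨hupp i, fun h => ?_⟩
    have : u i ∈ (ppf n k).image u := by rw [himgu]; exact h
    rw [Finset.mem_image] at this
    obtain ⟨j, hj, hji⟩ := this
    have := u.injective hji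
    rwa [← this]
  set σ : Equiv.Perm (Fin n) :=
    Equiv.Perm.ofSubtype (u.subtypePerm (fun i => (hiff i).symm)) with hσdef
  have hσapp : ∀ i : Fin n, i ∈ ppf n k → σ i = u i := by
    intro i hi
    rw [hσdef, Equiv.Perm.ofSubtype_apply_of_mem _ hi]
    rfl
  have hσfix : ∀ i : Fin n, i ∉ ppf n k → σ i = i := by
    intro i hi
    rw [hσdef, Equiv.Perm.ofSubtype_apply_of_not_mem _ hi]
  have hσA : σ ∈ APf n k := by
    rw [mem_APf]
    intro i hi
    refine hσfix i ?_
    rw [mem_ppf]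
    omega
  have hσ0 : σ 0 = 0 := by
    apply hσfix
    rw [mem_ppf]
    simp
  set h : Equiv.Perm (Fin n) := σ⁻¹ * u with hh
  have hhB : h ∈ BPf n k := by
    rw [mem_BPf]
    intro i h1 h2
    rw [hh]
    simp only [Equiv.Perm.mul_apply]
    rw [← hσapp i (mem_ppf.mpr ⟨h1, h2⟩)]
    simp
  have hgdecomp : g = gs * (σ * (σ⁻¹ * u)) := by
    have : σ * (σ⁻¹ * u) = u := by group
    rw [this, hu]
    group
  refine ⟨(Equiv.Perm.sign σ : ℤ), ?_⟩
  rw [hgdecomp, ← hh]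
  have hsingle : single (gs * (σ * h)) (1 : ℤ)
      = single gs (1 : ℤ) * (single σ (1 : ℤ) * single h (1 : ℤ)) := by
    rw [MonoidAlgebra.single_mul_single, MonoidAlgebra.single_mul_single, one_mul, one_mul]
  rw [hsingle, mul_assoc, mul_assoc, single_mul_hookBA hhB, single_mul_hookBA_sign hσA hσ0,
    mul_smul_comm]

/-- The finset of "bad" indices: those `x` with `¬(2 ≤ x < k)`. -/
def Xf (n k : ℕ) : Finset (Fin n) :=
  Finset.univ.filter (fun x : Fin n => ¬(2 ≤ (x : ℕ) ∧ (x : ℕ) < k))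

lemma mem_Xf {x : Fin n} : x ∈ Xf n k ↔ ¬(2 ≤ (x : ℕ) ∧ (x : ℕ) < k) := by
  simp only [Xf, Finset.mem_filter, Finset.mem_univ, true_and]

/-- Permutations fixing every index `i` with `2 ≤ i < k`. -/
def BP2f (n k : ℕ) : Finset (Equiv.Perm (Fin n)) :=
  Finset.univ.filter
    (fun τ : Equiv.Perm (Fin n) => ∀ i : Fin n, 2 ≤ (i : ℕ) → (i : ℕ) < k → τ i = i)

lemma mem_BP2f {τ : Equiv.Perm (Fin n)} :
    τ ∈ BP2f n k ↔ ∀ i : Fin n, 2 ≤ (i : ℕ) → (i : ℕ) < k → τ i = i := by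
  simp only [BP2f, Finset.mem_filter, Finset.mem_univ, true_and]

/-- The bigger symmetrizer over permutations fixing `{2,…,k-1}`. -/
noncomputable def bplus (n k : ℕ) : MonoidAlgebra ℤ (Equiv.Perm (Fin n)) :=
  ∑ τ ∈ BP2f n k, single τ (1 : ℤ)

lemma swap01_mem_APf [NeZero n] (hk : 2 ≤ k) {i1 : Fin n} (hi1 : (i1 : ℕ) = 1) :
    Equiv.swap (0 : Fin n) i1 ∈ APf n k := by
  rw [mem_APf]
  intro i hi
  apply Equiv.swap_apply_of_ne_of_ne
  · intro h; rw [h] at hi; simp at hi; omega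
  · intro h; rw [h] at hi; omega

lemma swap01_mem_BP2f [NeZero n] {i1 : Fin n} (hi1 : (i1 : ℕ) = 1) :
    Equiv.swap (0 : Fin n) i1 ∈ BP2f n k := by
  rw [mem_BP2f]
  intro i h2 _
  apply Equiv.swap_apply_of_ne_of_ne
  · intro h; rw [h] at h2; simp at h2
  · intro h; rw [h] at h2; omega

lemma bplus_mul_swap01 [NeZero n] {i1 : Fin n} (hi1 : (i1 : ℕ) = 1) :
    bplus n k * single (Equiv.swap (0 : Fin n) i1) (1 : ℤ) = bplus n k := by
  rw [bplus, Finset.sum_mul]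
  refine Finset.sum_equiv (Equiv.mulRight (Equiv.swap (0 : Fin n) i1))
    (fun τ => ?_) (fun τ hτ => ?_)
  · simp only [Equiv.coe_mulRight]
    rw [mem_BP2f, mem_BP2f]
    constructor
    · intro h i h2 hik
      simp only [Equiv.Perm.mul_apply]
      rw [Equiv.swap_apply_of_ne_of_ne, h i h2 hik]
      · intro hc; rw [hc] at h2; simp at h2
      · intro hc; rw [hc] at h2; omega
    · intro h i h2 hik
      have := h i h2 hik
      simp only [Equiv.Perm.mul_apply] at this
      rw [Equiv.swap_apply_of_ne_of_ne] at this
      · exact this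
      · intro hc; rw [hc] at h2; simp at h2
      · intro hc; rw [hc] at h2; omega
  · simp only [Equiv.coe_mulRight, MonoidAlgebra.single_mul_single, mul_one]

lemma bplus_mul_hookA [NeZero n] (hk : 2 ≤ k) (hn : k ≤ n) {i1 : Fin n}
    (hi1 : (i1 : ℕ) = 1) : bplus n k * hookA n k = 0 := by
  have h01 : (0 : Fin n) ≠ i1 := by
    intro h
    have := congrArg (fun x : Fin n => (x : ℕ)) h
    simp [hi1] at this
  have hsign : ((Equiv.Perm.sign (Equiv.swap (0 : Fin n) i1) : ℤ)) = -1 := by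
    rw [Equiv.Perm.sign_swap h01]
    rfl
  have key : bplus n k * hookA n k = -(bplus n k * hookA n k) := by
    conv_lhs => rw [← bplus_mul_swap01 hi1, mul_assoc,
      single_mul_hookA (swap01_mem_APf hk hi1), hsign]
    rw [neg_one_smul, mul_neg]
  ext p
  have h1 := congrArg (fun z : MonoidAlgebra ℤ (Equiv.Perm (Fin n)) => z.coeff p) key
  have h3 : ((-(bplus n k * hookA n k)).coeff p : ℤ) = -((bplus n k * hookA n k).coeff p) := rfl
  rw [h3] at h1
  have : (bplus n k * hookA n k).coeff p = 0 := by omega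
  simpa using this

lemma bplus_decomp [NeZero n] (hk : 2 ≤ k) {i1 : Fin n} (hi1 : (i1 : ℕ) = 1) :
    bplus n k = ∑ x ∈ Xf n k, single (Equiv.swap i1 x) (1 : ℤ) * hookB n k := by
  have rhs_eq : ∀ x : Fin n, single (Equiv.swap i1 x) (1 : ℤ) * hookB n k
      = ∑ τ ∈ BPf n k, single (Equiv.swap i1 x * τ) (1 : ℤ) := by
    intro x
    rw [hookB_eq, Finset.mul_sum]
    refine Finset.sum_congr rfl (fun τ _ => ?_)
    rw [MonoidAlgebra.single_mul_single, one_mul]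
  have maps_to : ∀ τ ∈ BP2f n k, τ i1 ∈ Xf n k := by
    intro τ hτ
    rw [mem_Xf]
    rintro ⟨h2, hik⟩
    have := mem_BP2f.mp hτ (τ i1) h2 hik
    have := τ.injective this
    rw [← this] at h2
    omega
  rw [bplus, ← Finset.sum_fiberwise_of_maps_to maps_to (fun τ => single τ (1 : ℤ))]
  refine Finset.sum_congr rfl (fun x hx => ?_)
  rw [rhs_eq]
  refine Finset.sum_nbij' (fun τ' => Equiv.swap i1 x * τ')
    (fun τ => Equiv.swap i1 x * τ) ?_ ?_ ?_ ?_ ?_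
  · intro τ' hτ'
    rw [Finset.mem_filter] at hτ'
    obtain ⟨hτ', hval⟩ := hτ'
    rw [mem_BPf]
    intro i h1 hik
    rcases Nat.lt_or_ge (i : ℕ) 2 with h2 | h2
    · have hii1 : i = i1 := by
        apply Fin.ext
        omega
      rw [hii1]
      simp only [Equiv.Perm.mul_apply]
      rw [hval, Equiv.swap_apply_right]
    · simp only [Equiv.Perm.mul_apply]
      rw [mem_BP2f.mp hτ' i h2 hik]
      apply Equiv.swap_apply_of_ne_of_ne
      · intro hc; rw [hc] at h2; omega
      · intro hc
        have := mem_Xf.mp hx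
        rw [hc] at h2 hik
        exact this ⟨h2, hik⟩
  · intro τ hτ
    rw [Finset.mem_filter]
    constructor
    · rw [mem_BP2f]
      intro i h2 hik
      simp only [Equiv.Perm.mul_apply]
      rw [mem_BPf.mp hτ i (by omega) hik]
      apply Equiv.swap_apply_of_ne_of_ne
      · intro hc; rw [hc] at h2; omega
      · intro hc
        have := mem_Xf.mp hx
        rw [hc] at h2 hik
        exact this ⟨h2, hik⟩
    · simp only [Equiv.Perm.mul_apply]
      rw [mem_BPf.mp hτ i1 (by omega) (by omega), Equiv.swap_apply_left]
  · intro τ' _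
    show Equiv.swap i1 x * (Equiv.swap i1 x * τ') = τ'
    rw [← mul_assoc, Equiv.swap_mul_self, one_mul]
  · intro τ _
    show Equiv.swap i1 x * (Equiv.swap i1 x * τ) = τ
    rw [← mul_assoc, Equiv.swap_mul_self, one_mul]
  · intro τ' _
    show single τ' (1 : ℤ) = single (Equiv.swap i1 x * (Equiv.swap i1 x * τ')) (1 : ℤ)
    rw [← mul_assoc, Equiv.swap_mul_self, one_mul]

/-- The Garnir-type relation: the alternating sum over `x ∈ Xf` of `g·(1 x)·b·a` vanishes. -/
lemma garnir [NeZero n] (hk : 2 ≤ k) (hn : k ≤ n) {i1 : Fin n} (hi1 : (i1 : ℕ) = 1)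
    (g : Equiv.Perm (Fin n)) :
    ∑ x ∈ Xf n k, single (g * Equiv.swap i1 x) (1 : ℤ) * (hookB n k * hookA n k) = 0 := by
  have : ∑ x ∈ Xf n k, single (g * Equiv.swap i1 x) (1 : ℤ) * (hookB n k * hookA n k)
      = single g (1 : ℤ) * (bplus n k * hookA n k) := by
    rw [bplus_decomp hk hi1, Finset.sum_mul, Finset.mul_sum]
    refine Finset.sum_congr rfl (fun x hx => ?_)
    have hss : single (g * Equiv.swap i1 x) (1 : ℤ)
        = single g (1 : ℤ) * single (Equiv.swap i1 x) (1 : ℤ) := by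
      rw [MonoidAlgebra.single_mul_single, one_mul]
    rw [hss, mul_assoc, ← mul_assoc (single (Equiv.swap i1 x) (1 : ℤ))]
  rw [this, bplus_mul_hookA hk hn hi1, mul_zero]

/-- Existence of a canonical coset representative: a permutation fixing `0` and mapping
the index block `{1,…,k-1}` exactly onto `S`. -/
lemma exists_rep [NeZero n] (hk : 2 ≤ k) (hn : k ≤ n) (S : Finset (Fin n))
    (hcard : S.card = k - 1) (h0S : (0 : Fin n) ∉ S) :
    ∃ g : Equiv.Perm (Fin n), g 0 = 0 ∧
      ∀ i : Fin n, (1 ≤ (i : ℕ) ∧ (i : ℕ) < k) ↔ g i ∈ S := by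
  classical
  set p : Fin n → Prop := fun i => 1 ≤ (i : ℕ) ∧ (i : ℕ) < k with hp
  have hcp : Fintype.card {x : Fin n // p x} = k - 1 := by
    rw [Fintype.card_subtype]
    exact card_ppf hn
  have hcq : Fintype.card {x : Fin n // x ∈ S} = k - 1 := by
    simp [hcard]
  have e : {x : Fin n // p x} ≃ {x : Fin n // x ∈ S} :=
    Fintype.equivOfCardEq (by rw [hcp, hcq])
  have f : {x : Fin n // ¬ p x} ≃ {x : Fin n // ¬ x ∈ S} :=
    Fintype.equivOfCardEq (by
      rw [Fintype.card_subtype_compl, Fintype.card_subtype_compl, hcp, hcq])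
  set gt : Equiv.Perm (Fin n) := Equiv.subtypeCongr e f with hgt
  have hgt_pos : ∀ (x : Fin n) (h : p x), gt x = (e ⟨x, h⟩ : Fin n) := by
    intro x h
    rw [hgt]
    simp [Equiv.subtypeCongr, Equiv.sumCompl_symm_apply_of_pos h]
  have hgt_neg : ∀ (x : Fin n) (h : ¬ p x), gt x = (f ⟨x, h⟩ : Fin n) := by
    intro x h
    rw [hgt]
    simp [Equiv.subtypeCongr, Equiv.sumCompl_symm_apply_of_neg h]
  have hgt_mem : ∀ (x : Fin n), p x → gt x ∈ S := by
    intro x h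
    rw [hgt_pos x h]
    exact (e ⟨x, h⟩).2
  have hgt_nmem : ∀ (x : Fin n), ¬ p x → gt x ∉ S := by
    intro x h
    rw [hgt_neg x h]
    exact (f ⟨x, h⟩).2
  have hp0 : ¬ p (0 : Fin n) := by rw [hp]; simp
  set z : Fin n := gt 0 with hz
  have hzS : z ∉ S := hgt_nmem 0 hp0
  refine ⟨Equiv.swap z 0 * gt, ?_, ?_⟩
  · simp only [Equiv.Perm.mul_apply, ← hz, Equiv.swap_apply_left]
  · intro i
    constructor
    · intro hpi
      simp only [Equiv.Perm.mul_apply]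
      have hi : gt i ∈ S := hgt_mem i hpi
      rw [Equiv.swap_apply_of_ne_of_ne]
      · exact hi
      · intro hc; rw [hc] at hi; exact hzS hi
      · intro hc; rw [hc] at hi; exact h0S hi
    · intro hmem
      by_contra hpi
      have hi : gt i ∉ S := hgt_nmem i hpi
      simp only [Equiv.Perm.mul_apply] at hmem
      rcases eq_or_ne (gt i) z with hc | hc
      · rw [hc, Equiv.swap_apply_left] at hmem
        exact h0S hmem
      · rcases eq_or_ne (gt i) 0 with hc2 | hc2
        · rw [hc2, Equiv.swap_apply_right] at hmem
          exact hzS hmem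
        · rw [Equiv.swap_apply_of_ne_of_ne hc hc2] at hmem
          exact hi hmem

/-- Expansion of `g·b·a` as a sum of singles. -/
lemma gba_expand (g : Equiv.Perm (Fin n)) :
    single g (1 : ℤ) * (hookB n k * hookA n k)
      = ∑ τ ∈ BPf n k, ∑ σ ∈ APf n k,
          single (g * τ * σ) ((Equiv.Perm.sign σ : ℤ)) := by
  rw [hookB_eq, hookA_eq, Finset.sum_mul_sum, Finset.mul_sum]
  refine Finset.sum_congr rfl (fun τ _ => ?_)
  rw [Finset.mul_sum]
  refine Finset.sum_congr rfl (fun σ _ => ?_)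
  rw [MonoidAlgebra.single_mul_single, MonoidAlgebra.single_mul_single, one_mul, one_mul,
    mul_assoc]

/-- Coefficient of `g·b·a` at a point `x`. -/
lemma gba_apply (g x : Equiv.Perm (Fin n)) :
    (single g (1 : ℤ) * (hookB n k * hookA n k)).coeff x
      = ∑ τ ∈ BPf n k, ∑ σ ∈ APf n k,
          (if g * τ * σ = x then ((Equiv.Perm.sign σ : ℤ)) else 0) := by
  rw [gba_expand]
  rw [MonoidAlgebra.coeff_sum, Finsupp.finset_sum_apply]
  refine Finset.sum_congr rfl (fun τ _ => ?_)
  rw [MonoidAlgebra.coeff_sum, Finsupp.finset_sum_apply]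
  refine Finset.sum_congr rfl (fun σ _ => ?_)
  rw [MonoidAlgebra.single_apply]

/-- Unique-factorization property of products `g·τ·σ` landing on another representative. -/
lemma key_factor [NeZero n] (hk : 2 ≤ k) (hn : k ≤ n)
    (S S' : Finset (Fin n)) (hS : S.card = k - 1) (hS' : S'.card = k - 1)
    (h0S : (0 : Fin n) ∉ S) (h0S' : (0 : Fin n) ∉ S')
    (g g' : Equiv.Perm (Fin n)) (hg0 : g 0 = 0)
    (hgiff : ∀ i : Fin n, (1 ≤ (i : ℕ) ∧ (i : ℕ) < k) ↔ g i ∈ S)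
    (hg0' : g' 0 = 0)
    (hgiff' : ∀ i : Fin n, (1 ≤ (i : ℕ) ∧ (i : ℕ) < k) ↔ g' i ∈ S')
    (τ σ : Equiv.Perm (Fin n)) (hτ : τ ∈ BPf n k) (hσ : σ ∈ APf n k)
    (heq : g * τ * σ = g') :
    S = S' ∧ (g = g' → τ = 1 ∧ σ = 1) := by
  have happly : ∀ i : Fin n, g (τ (σ i)) = g' i := by
    intro i
    have := congrArg (fun ρ : Equiv.Perm (Fin n) => ρ i) heq
    simpa [Equiv.Perm.mul_apply] using this
  have hk0 : (0 : ℕ) < k := by omega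
  have hσ0 : σ 0 = 0 := by
    by_contra hσ0
    have hlt : ((σ 0 : Fin n) : ℕ) < k := by
      apply apf_lt_k hσ
      simp [hk0]
    have hge : 1 ≤ ((σ 0 : Fin n) : ℕ) := by
      rcases Nat.eq_zero_or_pos ((σ 0 : Fin n) : ℕ) with h | h
      · exact absurd (Fin.ext h) hσ0
      · exact h
    have hτfix : τ (σ 0) = σ 0 := mem_BPf.mp hτ _ hge hlt
    have hgσ0 : g (σ 0) = 0 := by rw [← hτfix]; rw [happly 0, hg0']
    exact hσ0 (g.injective (hgσ0.trans hg0.symm))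
  have hτ0 : τ 0 = 0 := by
    have hgτ0 : g (τ 0) = 0 := by
      have := happly 0
      rw [hσ0, hg0'] at this
      exact this
    exact g.injective (hgτ0.trans hg0.symm)
  have hsub : S' ⊆ S := by
    intro x hx
    set i : Fin n := g'⁻¹ x with hi
    have hgi : g' i = x := by rw [hi, ← Equiv.Perm.mul_apply, mul_inv_cancel, Equiv.Perm.one_apply]
    have hppi : 1 ≤ (i : ℕ) ∧ (i : ℕ) < k := by
      apply (hgiff' i).mpr
      rw [hgi]; exact hx
    have hppσi : 1 ≤ ((σ i : Fin n) : ℕ) ∧ ((σ i : Fin n) : ℕ) < k := by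
      refine ⟨?_, apf_lt_k hσ hppi.2⟩
      rcases Nat.eq_zero_or_pos ((σ i : Fin n) : ℕ) with h | h
      · exfalso
        have : σ i = 0 := Fin.ext h
        rw [← hσ0] at this
        have := σ.injective this
        rw [this] at hppi
        simp at hppi
      · exact h
    have hτfix : τ (σ i) = σ i := mem_BPf.mp hτ _ hppσi.1 hppσi.2
    have : g (σ i) = x := by rw [← hτfix, happly, hgi]
    rw [← this]
    exact (hgiff (σ i)).mp hppσi
  have hSeq : S = S' := (Finset.eq_of_subset_of_card_le hsub (by omega)).symm
  refine ⟨hSeq, fun hgg => ?_⟩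
  have hτσ : τ * σ = 1 := by
    have : g * (τ * σ) = g * 1 := by
      rw [mul_one, ← mul_assoc, heq, hgg]
    exact mul_left_cancel this
  have hσ1 : σ = 1 := by
    refine Equiv.ext fun i => ?_
    simp only [Equiv.Perm.coe_one, id_eq]
    rcases Nat.lt_or_ge (i : ℕ) k with hik | hik
    · rcases Nat.eq_zero_or_pos (i : ℕ) with h | h
      · rw [show i = (0 : Fin n) from Fin.ext h, hσ0]
      · have hτi : τ i = i := mem_BPf.mp hτ i h hik
        have h1 : τ (σ i) = i := by
          have := congrArg (fun ρ : Equiv.Perm (Fin n) => ρ i) hτσ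
          simpa [Equiv.Perm.mul_apply] using this
        have h2 : τ (σ i) = τ i := by rw [h1, hτi]
        exact τ.injective h2
    · exact mem_APf.mp hσ i hik
  refine ⟨?_, hσ1⟩
  rw [hσ1, mul_one] at hτσ
  exact hτσ

/-- The coefficient of one representative's `g·b·a` at another representative. -/
lemma eval_delta [NeZero n] (hk : 2 ≤ k) (hn : k ≤ n)
    (S S' : Finset (Fin n)) (hS : S.card = k - 1) (hS' : S'.card = k - 1)
    (h0S : (0 : Fin n) ∉ S) (h0S' : (0 : Fin n) ∉ S')
    (g g' : Equiv.Perm (Fin n)) (hg0 : g 0 = 0)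
    (hgiff : ∀ i : Fin n, (1 ≤ (i : ℕ) ∧ (i : ℕ) < k) ↔ g i ∈ S)
    (hg0' : g' 0 = 0)
    (hgiff' : ∀ i : Fin n, (1 ≤ (i : ℕ) ∧ (i : ℕ) < k) ↔ g' i ∈ S')
    (hfun : S = S' → g = g') :
    (single g (1 : ℤ) * (hookB n k * hookA n k)).coeff g' = if S = S' then 1 else 0 := by
  classical
  rw [gba_apply]
  by_cases hSS : S = S'
  · have hgg : g = g' := hfun hSS
    rw [if_pos hSS]
    have hcond : ∀ τ ∈ BPf n k, ∀ σ ∈ APf n k, ((g * τ * σ = g') ↔ (τ = 1 ∧ σ = 1)) := by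
      intro τ hτ σ hσ
      constructor
      · intro heq
        exact (key_factor hk hn S S' hS hS' h0S h0S' g g' hg0 hgiff hg0' hgiff'
          τ σ hτ hσ heq).2 hgg
      · rintro ⟨rfl, rfl⟩
        rw [mul_one, mul_one, hgg]
    have : ∀ τ ∈ BPf n k,
        (∑ σ ∈ APf n k, (if g * τ * σ = g' then ((Equiv.Perm.sign σ : ℤ)) else 0))
          = if τ = 1 then 1 else 0 := by
      intro τ hτ
      by_cases hτ1 : τ = 1
      · rw [if_pos hτ1]
        have : ∀ σ ∈ APf n k,
            (if g * τ * σ = g' then ((Equiv.Perm.sign σ : ℤ)) else 0)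
              = if σ = 1 then ((Equiv.Perm.sign σ : ℤ)) else 0 := by
          intro σ hσ
          refine if_congr ?_ rfl rfl
          rw [hcond τ hτ σ hσ]
          simp [hτ1]
        rw [Finset.sum_congr rfl this, Finset.sum_ite_eq' (APf n k) 1
          (fun σ => ((Equiv.Perm.sign σ : ℤ)))]
        rw [if_pos one_mem_APf]
        simp
      · rw [if_neg hτ1]
        apply Finset.sum_eq_zero
        intro σ hσ
        rw [if_neg]
        intro heq
        exact hτ1 ((hcond τ hτ σ hσ).mp heq).1
    rw [Finset.sum_congr rfl this, Finset.sum_ite_eq' (BPf n k) 1 (fun _ => (1 : ℤ)),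
      if_pos one_mem_BPf]
  · rw [if_neg hSS]
    apply Finset.sum_eq_zero
    intro τ hτ
    apply Finset.sum_eq_zero
    intro σ hσ
    rw [if_neg]
    intro heq
    exact hSS (key_factor hk hn S S' hS hS' h0S h0S' g g' hg0 hgiff hg0' hgiff'
      τ σ hτ hσ heq).1

end HookAux

/-- The ℤ-submodule of `ℤ[Σₙ]` spanned by the elements `g·b·a`, `g ∈ Σₙ`, is a free
abelian group of rank `binom(n-1, k-1)`. -/
theorem hook_ideal_dual_free_abelian (n k : ℕ) (hk : 2 ≤ k) (hn : k ≤ n) :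
    Nonempty
      (↥(Submodule.span ℤ (Set.range fun g : Equiv.Perm (Fin n) =>
          MonoidAlgebra.single g (1 : ℤ) * (hookB n k * hookA n k))) ≃ₗ[ℤ]
        (Fin (Nat.choose (n - 1) (k - 1)) → ℤ)) := by
  classical
  haveI : NeZero n := ⟨by omega⟩
  open HookAux MonoidAlgebra in
  -- the family `g ↦ g·b·a`
  set f : Equiv.Perm (Fin n) → MonoidAlgebra ℤ (Equiv.Perm (Fin n)) :=
    fun g => MonoidAlgebra.single g (1 : ℤ) * (hookB n k * hookA n k) with hf
  -- the index type: subsets of size `k-1` avoiding `0`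
  set I := {S : Finset (Fin n) // S.card = k - 1 ∧ (0 : Fin n) ∉ S} with hI
  choose rep hrep0 hrepiff using
    fun S : I => HookAux.exists_rep hk hn S.1 S.2.1 S.2.2
  set w : I → MonoidAlgebra ℤ (Equiv.Perm (Fin n)) := fun S => f (rep S) with hw
  have i1lt : 1 < n := by omega
  set i1 : Fin n := ⟨1, i1lt⟩ with hi1def
  have hi1 : (i1 : ℕ) = 1 := rfl
  -- Step 1: spanning in the zero-free case
  have span_nz : ∀ g : Equiv.Perm (Fin n),
      (∀ i : Fin n, 1 ≤ (i : ℕ) → (i : ℕ) < k → g i ≠ 0) →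
      f g ∈ Submodule.span ℤ (Set.range w) := by
    intro g hgnz
    set S₀ : Finset (Fin n) := (HookAux.ppf n k).image g with hS₀
    have hcard : S₀.card = k - 1 := by
      rw [hS₀, Finset.card_image_of_injective _ g.injective, HookAux.card_ppf hn]
    have h0 : (0 : Fin n) ∉ S₀ := by
      rw [hS₀, Finset.mem_image]
      rintro ⟨i, hi, hgi⟩
      rw [HookAux.mem_ppf] at hi
      exact hgnz i hi.1 hi.2 hgi
    set Si : I := ⟨S₀, hcard, h0⟩ with hSi
    obtain ⟨ε, hε⟩ := HookAux.stepA hk hn S₀ hcard g (rep Si)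
      (fun i h1 h2 => Finset.mem_image_of_mem g (HookAux.mem_ppf.mpr ⟨h1, h2⟩))
      (fun i h1 h2 => (hrepiff Si i).mp ⟨h1, h2⟩)
    rw [hf]
    simp only
    rw [hε]
    exact Submodule.smul_mem _ _ (Submodule.subset_span ⟨Si, rfl⟩)
  -- Step 2: spanning in general
  have span_all : ∀ g : Equiv.Perm (Fin n), f g ∈ Submodule.span ℤ (Set.range w) := by
    intro g
    by_cases hz : ∃ j : Fin n, (1 ≤ (j : ℕ) ∧ (j : ℕ) < k) ∧ g j = 0
    · obtain ⟨j, hj, hgj⟩ := hz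
      set gs : Equiv.Perm (Fin n) := g * Equiv.swap i1 j with hgs
      have hppi1 : 1 ≤ (i1 : ℕ) ∧ (i1 : ℕ) < k := by rw [hi1]; omega
      have hswap_pp : ∀ i : Fin n, 1 ≤ (i : ℕ) → (i : ℕ) < k →
          (1 ≤ ((Equiv.swap i1 j i : Fin n) : ℕ) ∧ ((Equiv.swap i1 j i : Fin n) : ℕ) < k) := by
        intro i h1 h2
        rcases eq_or_ne i i1 with rfl | hne1
        · rw [Equiv.swap_apply_left]; exact hj
        · rcases eq_or_ne i j with rfl | hne2
          · rw [Equiv.swap_apply_right]; exact hppi1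
          · rw [Equiv.swap_apply_of_ne_of_ne hne1 hne2]; exact ⟨h1, h2⟩
      set S₀ : Finset (Fin n) := (HookAux.ppf n k).image g with hS₀
      have hcard : S₀.card = k - 1 := by
        rw [hS₀, Finset.card_image_of_injective _ g.injective, HookAux.card_ppf hn]
      obtain ⟨ε, hε⟩ := HookAux.stepA hk hn S₀ hcard g gs
        (fun i h1 h2 => Finset.mem_image_of_mem g (HookAux.mem_ppf.mpr ⟨h1, h2⟩))
        (fun i h1 h2 => by
          rw [hgs]
          exact Finset.mem_image_of_mem g
            (HookAux.mem_ppf.mpr (hswap_pp i h1 h2)))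
      have hgar := HookAux.garnir (n := n) (k := k) hk hn hi1 gs
      have hi1X : i1 ∈ HookAux.Xf n k := by
        rw [HookAux.mem_Xf, hi1]
        omega
      have hsplit :
          (∑ x ∈ (HookAux.Xf n k).erase i1, f (gs * Equiv.swap i1 x)) + f (gs * Equiv.swap i1 i1)
            = ∑ x ∈ HookAux.Xf n k, f (gs * Equiv.swap i1 x) :=
        Finset.sum_erase_add _ _ hi1X
      have hswapself : gs * Equiv.swap i1 i1 = gs := by
        rw [Equiv.swap_self]
        rfl
      have hfgs : f gs = - ∑ x ∈ (HookAux.Xf n k).erase i1, f (gs * Equiv.swap i1 x) := by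
        have h0' : ∑ x ∈ HookAux.Xf n k, f (gs * Equiv.swap i1 x) = 0 := hgar
      -- each erased term is zero-free
        rw [h0', hswapself] at hsplit
        exact eq_neg_of_add_eq_zero_right hsplit
      have hterm : ∀ x ∈ (HookAux.Xf n k).erase i1,
          f (gs * Equiv.swap i1 x) ∈ Submodule.span ℤ (Set.range w) := by
        intro x hx
        obtain ⟨hxne, hxX⟩ := Finset.mem_erase.mp hx
        apply span_nz
        intro i h1 h2 hc
        have hval : (gs * Equiv.swap i1 x) i
            = g (Equiv.swap i1 j (Equiv.swap i1 x i)) := by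
          rw [hgs]
          simp [Equiv.Perm.mul_apply]
        rw [hval] at hc
        have hvj : Equiv.swap i1 j (Equiv.swap i1 x i) = j :=
          g.injective (hc.trans hgj.symm)
        have hv2 : Equiv.swap i1 x i = i1 := by
          have h3 := congrArg (Equiv.swap i1 j) hvj
          rwa [Equiv.swap_apply_self, Equiv.swap_apply_right] at h3
        have hix : i = x := by
          have h4 := congrArg (Equiv.swap i1 x) hv2
          rwa [Equiv.swap_apply_self, Equiv.swap_apply_left] at h4
        rw [HookAux.mem_Xf] at hxX
        rw [hix] at h1 h2
        have hxval : (x : ℕ) = 1 := by omega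
        exact hxne (Fin.ext (hxval.trans hi1.symm))
      have hfg : f g = ε • f gs := hε
      rw [hfg, hfgs]
      exact Submodule.smul_mem _ _
        (Submodule.neg_mem _ (Submodule.sum_mem _ hterm))
    · push_neg at hz
      exact span_nz g (fun i h1 h2 => hz i ⟨h1, h2⟩)
  -- span equality
  have hspan_eq : Submodule.span ℤ (Set.range f) = Submodule.span ℤ (Set.range w) := by
    apply le_antisymm
    · rw [Submodule.span_le]
      rintro _ ⟨g, rfl⟩
      exact span_all g
    · rw [Submodule.span_le]
      rintro _ ⟨S, rfl⟩
      exact Submodule.subset_span ⟨rep S, rfl⟩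
  -- linear independence of the canonical family
  have heval : ∀ j i : I, (w j).coeff (rep i) = if j = i then 1 else 0 := by
    intro j i
    have hev := HookAux.eval_delta hk hn j.1 i.1 j.2.1 i.2.1 j.2.2 i.2.2 (rep j) (rep i)
      (hrep0 j) (hrepiff j) (hrep0 i) (hrepiff i)
      (fun hh => by rw [show j = i from Subtype.ext hh])
    rw [hw]
    simp only [hf]
    rw [hev]
    exact if_congr Subtype.ext_iff.symm rfl rfl
  have hli : LinearIndependent ℤ w := by
    rw [linearIndependent_iff']
    intro s c hsum i hi
    have happ := congrArg
      (fun z : MonoidAlgebra ℤ (Equiv.Perm (Fin n)) => z.coeff (rep i)) hsum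
    rw [MonoidAlgebra.coeff_sum, Finsupp.finset_sum_apply] at happ
    rw [Finset.sum_congr rfl (fun j _ => by
      rw [MonoidAlgebra.coeff_smul_apply, heval j i, smul_eq_mul, mul_ite, mul_one, mul_zero])] at happ
    rw [Finset.sum_ite_eq' s i c, if_pos hi] at happ
    simpa using happ
  have bI : Module.Basis I ℤ (Submodule.span ℤ (Set.range w)) := Module.Basis.span hli
  -- cardinality of the index type
  have ecard : I ≃
      {S : Finset (Fin n) // S ∈ (Finset.univ.erase (0 : Fin n)).powersetCard (k - 1)} := by
    apply Equiv.subtypeEquivRight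
    intro S
    rw [Finset.mem_powersetCard, Finset.subset_erase]
    constructor
    · rintro ⟨h1, h2⟩
      exact ⟨⟨Finset.subset_univ S, h2⟩, h1⟩
    · rintro ⟨⟨_, h2⟩, h1⟩
      exact ⟨h1, h2⟩
  have hcardI : Fintype.card I = Nat.choose (n - 1) (k - 1) := by
    rw [Fintype.card_congr ecard, Fintype.card_coe, Finset.card_powersetCard,
      Finset.card_erase_of_mem (Finset.mem_univ _), Finset.card_univ, Fintype.card_fin]
  refine ⟨?_⟩
  have e1 : (Submodule.span ℤ (Set.range f)) ≃ₗ[ℤ] Submodule.span ℤ (Set.range w) :=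
    LinearEquiv.ofEq _ _ hspan_eq
  exact (e1.trans bI.equivFun).trans
    (LinearEquiv.funCongrLeft ℤ ℤ (Fintype.equivFinOfCardEq hcardI).symm)
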